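/- arXiv:2005.04446 — 3 statements merged into one kernel-verified Lean document; each statement's English description precedes it below -/
import Mathlib

section
/- Let a,b>0, τ≥0, c>0, and let φ̂:ℝ→ℝ be continuous with 0 ≤ φ̂(t) ≤ a/b for all t, φ̂ not identically 0 and not identically a/b, and φ̂(t)→a/b as t→+∞. Then the Bessel potential η = B[φ̂] satisfies 0 < η(t) < a/b and |η'(t)| ≤ a/(2b) for all t∈ℝ, and η(t)→a/b, η'(t)→0 as t→+∞. -/
open MeasureTheory Filter Topology Set

/-- The Bessel potential `B[φ]`, the unique bounded solution of `-η'' + τcη' + η = φ`. -/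
noncomputable def besselB (τ c : ℝ) (φ : ℝ → ℝ) (ξ : ℝ) : ℝ :=
  ∫ s in Set.Ioi (0:ℝ), ∫ z : ℝ,
    (Real.exp (-s) / Real.sqrt (4 * Real.pi * s)) *
      Real.exp (-(ξ - z)^2 / (4 * s)) * φ (z - τ * c * s)

namespace BesselAux

/-- heat-type kernel -/
noncomputable def ker (s ξ z : ℝ) : ℝ :=
  Real.exp (-s) / Real.sqrt (4 * Real.pi * s) * Real.exp (-(ξ - z)^2 / (4 * s))

/-- `ξ`-derivative of the kernel -/
noncomputable def ker' (s ξ z : ℝ) : ℝ :=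
  (-(ξ - z) / (2 * s)) * ker s ξ z

variable {s ξ z m L r : ℝ} {ψ φ : ℝ → ℝ}

lemma sqrt4pis_pos (hs : 0 < s) : 0 < Real.sqrt (4 * Real.pi * s) :=
  Real.sqrt_pos.2 (by positivity)

lemma ker_pos (hs : 0 < s) : 0 < ker s ξ z := by
  have h := sqrt4pis_pos hs
  unfold ker
  positivity

lemma ker_nonneg (hs : 0 < s) : 0 ≤ ker s ξ z := (ker_pos hs).le

lemma ker_arg_eq (hs : 0 < s) (ξ z : ℝ) :
    -(ξ - z)^2 / (4 * s) = -((4*s)⁻¹) * (z - ξ)^2 := by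
  field_simp
  ring

lemma ker_eq (hs : 0 < s) :
    ker s ξ z = Real.exp (-s) / Real.sqrt (4 * Real.pi * s)
      * Real.exp (-((4*s)⁻¹) * (z - ξ)^2) := by
  rw [ker, ker_arg_eq hs]

lemma gauss_integrable (hs : 0 < s) (ξ : ℝ) :
    Integrable (fun z => Real.exp (-((4*s)⁻¹) * (z - ξ)^2)) := by
  exact (integrable_exp_neg_mul_sq (by positivity)).comp_sub_right ξ

lemma ker_integrable (hs : 0 < s) (ξ : ℝ) : Integrable (ker s ξ) := by
  have := (gauss_integrable hs ξ).const_mul (Real.exp (-s) / Real.sqrt (4 * Real.pi * s))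
  refine this.congr (Eventually.of_forall fun z => ?_)
  rw [ker_eq hs]

lemma ker_integral (hs : 0 < s) (ξ : ℝ) : ∫ z, ker s ξ z = Real.exp (-s) := by
  have h1 : ∫ z, ker s ξ z
      = Real.exp (-s) / Real.sqrt (4 * Real.pi * s)
        * ∫ z, Real.exp (-((4*s)⁻¹) * (z - ξ)^2) := by
    rw [← integral_const_mul]
    congr 1 with z
    rw [ker_eq hs]
  rw [h1]
  have h2 : ∫ z, Real.exp (-((4*s)⁻¹) * (z - ξ)^2)
      = ∫ z, Real.exp (-((4*s)⁻¹) * z^2) :=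
    integral_sub_right_eq_self (fun z => Real.exp (-((4*s)⁻¹) * z^2)) ξ
  rw [h2, integral_gaussian]
  have h3 : Real.pi / (4*s)⁻¹ = 4 * Real.pi * s := by
    field_simp
  rw [h3, div_mul_cancel₀]
  exact (sqrt4pis_pos hs).ne'


lemma ker_continuous (s ξ : ℝ) : Continuous (ker s ξ) := by
  unfold ker; fun_prop

lemma ker'_continuous (s ξ : ℝ) : Continuous (ker' s ξ) := by
  unfold ker' ker; fun_prop

-- ker' rewriting
lemma ker'_eq (hs : 0 < s) (ξ : ℝ) :
    ker' s ξ = fun z => (Real.exp (-s) / Real.sqrt (4 * Real.pi * s) / (2*s)) *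
      ((z - ξ) * Real.exp (-((4*s)⁻¹) * (z - ξ)^2)) := by
  funext z
  unfold ker' ker
  have : -(ξ - z)^2 / (4 * s) = -((4*s)⁻¹) * (z - ξ)^2 := by field_simp; ring
  rw [this]
  field_simp
  ring

lemma ker'_integrable (hs : 0 < s) (ξ : ℝ) : Integrable (ker' s ξ) := by
  rw [ker'_eq hs]
  exact (((integrable_mul_exp_neg_mul_sq (by positivity : (0:ℝ) < (4*s)⁻¹)).comp_sub_right
    ξ).const_mul _)

-- odd integral zero
lemma integral_x_exp_zero {b : ℝ} (hb : 0 < b) :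
    ∫ x : ℝ, x * Real.exp (-b * x^2) = 0 := by
  set f : ℝ → ℝ := fun x => x * Real.exp (-b * x^2) with hf
  have h1 : ∫ x, f (-x) = ∫ x, f x := integral_neg_eq_self f volume
  have h2 : ∀ x, f (-x) = - f x := by
    intro x; simp only [f]; ring_nf
  rw [integral_congr_ae (Eventually.of_forall h2), integral_neg] at h1
  linarith

lemma ker'_integral_zero (hs : 0 < s) (ξ : ℝ) : ∫ z, ker' s ξ z = 0 := by
  rw [ker'_eq hs, integral_const_mul]
  have h : ∫ z, (z - ξ) * Real.exp (-((4*s)⁻¹) * (z - ξ)^2)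
      = ∫ z, z * Real.exp (-((4*s)⁻¹) * z^2) :=
    integral_sub_right_eq_self (fun z => z * Real.exp (-((4*s)⁻¹) * z^2)) ξ
  rw [h, integral_x_exp_zero (by positivity)]
  ring

lemma integral_x_exp_Ioi {b : ℝ} (hb : 0 < b) :
    ∫ x in Ioi (0:ℝ), x * Real.exp (-b * x^2) = (2*b)⁻¹ := by
  have A : ∀ x : ℝ, HasDerivAt (fun x => -(2*b)⁻¹ * Real.exp (-b * x^2))
      (x * Real.exp (-b * x^2)) x := by
    intro x
    refine (((hasDerivAt_pow 2 x).const_mul (-b)).exp.const_mul (-(2*b)⁻¹)).congr_deriv ?_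
    norm_num
    field_simp
  have B : Tendsto (fun y : ℝ => -(2*b)⁻¹ * Real.exp (-b * y^2)) atTop (𝓝 (-(2*b)⁻¹ * 0)) := by
    refine Tendsto.const_mul _ ?_
    refine Real.tendsto_exp_atBot.comp ?_
    exact (tendsto_pow_atTop two_ne_zero).const_mul_atTop_of_neg (neg_lt_zero.2 hb)
  have := integral_Ioi_of_hasDerivAt_of_tendsto' (a := 0) (fun x _ => A x)
    (integrable_mul_exp_neg_mul_sq hb).integrableOn B
  rw [this]
  norm_num

lemma ker'_abs_integral (hs : 0 < s) (ξ : ℝ) :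
    ∫ z, |ker' s ξ z| = Real.exp (-s) / Real.sqrt (Real.pi * s) := by
  have habs : ∀ z, |ker' s ξ z| =
      (Real.exp (-s) / Real.sqrt (4 * Real.pi * s) / (2*s)) *
        (|z - ξ| * Real.exp (-((4*s)⁻¹) * (z - ξ)^2)) := by
    intro z
    rw [ker'_eq hs]
    have hC : 0 ≤ Real.exp (-s) / Real.sqrt (4 * Real.pi * s) / (2*s) := by positivity
    rw [abs_mul, abs_of_nonneg hC, abs_mul, abs_of_nonneg (Real.exp_pos _).le]
  rw [integral_congr_ae (Eventually.of_forall habs), integral_const_mul]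
  have h : ∫ z, |z - ξ| * Real.exp (-((4*s)⁻¹) * (z - ξ)^2)
      = ∫ z, |z| * Real.exp (-((4*s)⁻¹) * z^2) :=
    integral_sub_right_eq_self (fun z => |z| * Real.exp (-((4*s)⁻¹) * z^2)) ξ
  rw [h]
  have h2 : ∀ z : ℝ, |z| * Real.exp (-((4*s)⁻¹) * z^2)
      = (fun x => x * Real.exp (-((4*s)⁻¹) * x^2)) |z| := by
    intro z; simp only []; rw [sq_abs]
  rw [integral_congr_ae (Eventually.of_forall h2),
    integral_comp_abs (f := fun x => x * Real.exp (-((4*s)⁻¹) * x^2)),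
    integral_x_exp_Ioi (by positivity)]
  have hsqrt : Real.sqrt (4 * Real.pi * s) = 2 * Real.sqrt (Real.pi * s) := by
    rw [show (4:ℝ) * Real.pi * s = 4 * (Real.pi * s) by ring,
      Real.sqrt_mul (by norm_num : (0:ℝ) ≤ 4),
      show Real.sqrt 4 = 2 by
        rw [show (4:ℝ) = 2^2 by norm_num, Real.sqrt_sq (by norm_num : (0:ℝ) ≤ 2)]]
  rw [hsqrt]
  have hps : 0 < Real.sqrt (Real.pi * s) := Real.sqrt_pos.2 (by positivity)
  field_simp
  ring


lemma ker_mul_integrable (hs : 0 < s) (ξ : ℝ) (hψ : Continuous ψ)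
    (hbd : ∀ z, |ψ z| ≤ m) : Integrable (fun z => ker s ξ z * ψ z) := by
  refine Integrable.mono' ((ker_integrable hs ξ).mul_const m)
    ((ker_continuous s ξ).mul hψ).aestronglyMeasurable
    (Eventually.of_forall fun z => ?_)
  rw [Real.norm_eq_abs, abs_mul, abs_of_nonneg (ker_pos (z := z) hs).le]
  exact mul_le_mul_of_nonneg_left (hbd z) (ker_pos hs).le

lemma ker'_mul_integrable (hs : 0 < s) (ξ : ℝ) (hψ : Continuous ψ)
    (hbd : ∀ z, |ψ z| ≤ m) : Integrable (fun z => ker' s ξ z * ψ z) := by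
  refine Integrable.mono' ((ker'_integrable hs ξ).abs.mul_const m)
    ((ker'_continuous s ξ).mul hψ).aestronglyMeasurable
    (Eventually.of_forall fun z => ?_)
  rw [Real.norm_eq_abs, abs_mul]
  exact mul_le_mul_of_nonneg_left (hbd z) (abs_nonneg _) |>.trans
    (le_of_eq rfl)

lemma ker_mul_le (hs : 0 < s) (ξ : ℝ) (hψ : Continuous ψ)
    (h0 : ∀ z, 0 ≤ ψ z) (h1 : ∀ z, ψ z ≤ m) :
    (0 ≤ ∫ z, ker s ξ z * ψ z) ∧ (∫ z, ker s ξ z * ψ z ≤ Real.exp (-s) * m) := by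
  have hm : 0 ≤ m := le_trans (h0 0) (h1 0)
  have hbd : ∀ z, |ψ z| ≤ m := fun z => by rw [abs_of_nonneg (h0 z)]; exact h1 z
  constructor
  · exact integral_nonneg fun z => mul_nonneg (ker_pos hs).le (h0 z)
  · have : ∫ z, ker s ξ z * ψ z ≤ ∫ z, ker s ξ z * m := by
      refine integral_mono (ker_mul_integrable hs ξ hψ hbd)
        ((ker_integrable hs ξ).mul_const m) fun z => ?_
      exact mul_le_mul_of_nonneg_left (h1 z) (ker_pos hs).le
    rwa [integral_mul_const, ker_integral hs] at this

lemma ker_mul_pos (hs : 0 < s) (ξ : ℝ) (hψ : Continuous ψ)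
    (h0 : ∀ z, 0 ≤ ψ z) (h1 : ∀ z, ψ z ≤ m) {z₀ : ℝ} (hz₀ : 0 < ψ z₀) :
    0 < ∫ z, ker s ξ z * ψ z := by
  have hbd : ∀ z, |ψ z| ≤ m := fun z => by rw [abs_of_nonneg (h0 z)]; exact h1 z
  rw [integral_pos_iff_support_of_nonneg_ae
    (Eventually.of_forall fun z => mul_nonneg (ker_pos hs).le (h0 z))
    (ker_mul_integrable hs ξ hψ hbd)]
  have hopen : IsOpen (ψ ⁻¹' Ioi 0) := isOpen_Ioi.preimage hψ
  have hsub : ψ ⁻¹' Ioi 0 ⊆ Function.support fun z => ker s ξ z * ψ z := by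
    intro z hz
    exact (mul_pos (ker_pos hs) hz).ne'
  calc (0:ENNReal) < volume (ψ ⁻¹' Ioi 0) := hopen.measure_pos volume ⟨z₀, hz₀⟩
    _ ≤ _ := measure_mono hsub

/-- subtracting a constant from the multiplier does not change the `ker'` integral -/
lemma ker'_mul_sub_const (hs : 0 < s) (ξ : ℝ) (hψ : Continuous ψ)
    (hbd : ∀ z, |ψ z| ≤ m) (r : ℝ) :
    ∫ z, ker' s ξ z * ψ z = ∫ z, ker' s ξ z * (ψ z - r) := by
  have h1 : Integrable (fun z => ker' s ξ z * ψ z) := ker'_mul_integrable hs ξ hψ hbd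
  have h2 : Integrable (fun z => ker' s ξ z * r) := (ker'_integrable hs ξ).mul_const r
  have : ∫ z, ker' s ξ z * (ψ z - r) = (∫ z, ker' s ξ z * ψ z) - ∫ z, ker' s ξ z * r := by
    rw [← integral_sub h1 h2]
    congr 1 with z
    ring
  rw [this, integral_mul_const, ker'_integral_zero hs]
  ring

/-- the crucial bound `|∫ ker' ψ| ≤ r e^{-s}/√(πs)` when `|ψ - c| ≤ r`. -/
lemma ker'_mul_bound (hs : 0 < s) (ξ : ℝ) (hψ : Continuous ψ)
    (hbd : ∀ z, |ψ z| ≤ m) {cc r : ℝ} (hr : ∀ z, |ψ z - cc| ≤ r) :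
    |∫ z, ker' s ξ z * ψ z| ≤ r * (Real.exp (-s) / Real.sqrt (Real.pi * s)) := by
  rw [ker'_mul_sub_const hs ξ hψ hbd cc]
  have hr0 : 0 ≤ r := le_trans (abs_nonneg _) (hr 0)
  have habs : |∫ z, ker' s ξ z * (ψ z - cc)| ≤ ∫ z, |ker' s ξ z * (ψ z - cc)| := by
    simpa only [Real.norm_eq_abs] using
      norm_integral_le_integral_norm (fun z => ker' s ξ z * (ψ z - cc))
  refine habs.trans ?_
  have hint : Integrable (fun z => ker' s ξ z * (ψ z - cc)) :=
    ker'_mul_integrable hs ξ (hψ.sub continuous_const)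
      (m := m + |cc|) (fun z => (abs_sub _ _).trans (by
        have := hbd z; linarith [abs_nonneg cc]))
  have : ∫ z, |ker' s ξ z * (ψ z - cc)| ≤ ∫ z, |ker' s ξ z| * r := by
    refine integral_mono hint.abs ((ker'_integrable hs ξ).abs.mul_const r) fun z => ?_
    rw [abs_mul]
    exact mul_le_mul_of_nonneg_left (hr z) (abs_nonneg _)
  refine this.trans ?_
  rw [integral_mul_const, ker'_abs_integral hs]
  ring_nf
  exact le_refl _


lemma ker_hasDerivAt (hs : 0 < s) (z : ℝ) (ξ : ℝ) :
    HasDerivAt (fun x => ker s x z) (ker' s ξ z) ξ := by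
  have h1 : HasDerivAt (fun x : ℝ => (x - z)^2) (2 * (ξ - z)) ξ := by
    simpa using ((hasDerivAt_id ξ).sub_const z).fun_pow 2
  have h2 : HasDerivAt (fun x : ℝ => -(x - z)^2 / (4*s)) (-(2*(ξ - z)) / (4*s)) ξ := by
    simpa [neg_div] using (h1.neg).div_const (4*s)
  have h3 := (h2.exp).const_mul (Real.exp (-s) / Real.sqrt (4 * Real.pi * s))
  refine h3.congr_deriv ?_
  unfold ker' ker
  field_simp
  ring

lemma ker'_ball_bound (hs : 0 < s) (ξ₀ : ℝ) {x z : ℝ} (hx : x ∈ Metric.ball ξ₀ 1) :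
    |ker' s x z| ≤ Real.exp (-s) / Real.sqrt (4 * Real.pi * s) * ((Real.sqrt s)⁻¹
      * Real.exp ((8*s)⁻¹) * Real.exp (-(ξ₀ - z)^2 / (16 * s))) := by
  have hss : 0 < Real.sqrt s := Real.sqrt_pos.2 hs
  have hsq : Real.sqrt s ^ 2 = s := Real.sq_sqrt hs.le
  set u := x - z with hu
  clear_value u
  have h1 : |ker' s x z| = Real.exp (-s) / Real.sqrt (4 * Real.pi * s) *
      ((|u| / (2*s)) * Real.exp (-u^2 / (4*s))) := by
    rw [hu]
    unfold ker' ker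
    rw [abs_mul, abs_mul, abs_div, abs_neg,
      abs_of_nonneg (by positivity : (0:ℝ) ≤ 2*s),
      abs_of_nonneg (by positivity : (0:ℝ) ≤ Real.exp (-s) / Real.sqrt (4 * Real.pi * s)),
      abs_of_nonneg (Real.exp_pos _).le]
    ring
  have stepA : |u| / (2*s) ≤ (Real.sqrt s)⁻¹ * Real.exp (u^2 / (8*s)) := by
    have hge : u^2 / (8*s) + 1 ≤ Real.exp (u^2 / (8*s)) := Real.add_one_le_exp _
    have key : |u| * Real.sqrt s ≤ u^2/4 + 2*s := by
      nlinarith [sq_nonneg (|u| - 2*Real.sqrt s), hsq, sq_abs u, hs]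
    have base : |u| / (2*s) ≤ (Real.sqrt s)⁻¹ * (u^2 / (8*s) + 1) := by
      rw [inv_mul_eq_div, div_le_div_iff₀ (by positivity : (0:ℝ) < 2*s) hss]
      have hr : (u^2/(8*s) + 1) * (2*s) = u^2/4 + 2*s := by field_simp; ring
      rw [hr]
      exact key
    refine base.trans ?_
    exact mul_le_mul_of_nonneg_left hge (by positivity)
  have stepA' : |u| / (2*s) * Real.exp (-u^2 / (4*s))
      ≤ (Real.sqrt s)⁻¹ * Real.exp (-u^2 / (8*s)) :=
    calc |u| / (2*s) * Real.exp (-u^2 / (4*s))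
        ≤ (Real.sqrt s)⁻¹ * Real.exp (u^2 / (8*s)) * Real.exp (-u^2 / (4*s)) :=
          mul_le_mul_of_nonneg_right stepA (Real.exp_pos _).le
      _ = (Real.sqrt s)⁻¹ * Real.exp (-u^2 / (8*s)) := by
          rw [mul_assoc, ← Real.exp_add]; congr 2; field_simp; ring
  have stepB : Real.exp (-u^2 / (8*s))
      ≤ Real.exp ((8*s)⁻¹) * Real.exp (-(ξ₀ - z)^2 / (16 * s)) := by
    rw [← Real.exp_add]
    refine Real.exp_le_exp.2 ?_
    have hxd : |x - ξ₀| < 1 := by simpa [Real.dist_eq] using hx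
    have habs := abs_lt.1 hxd
    have h2 : (ξ₀ - z)^2 / 2 - 1 ≤ u^2 := by
      rw [hu]
      nlinarith [sq_nonneg ((ξ₀ - z) + 2*(x - ξ₀)), sq_nonneg (x - ξ₀), habs.1, habs.2]
    have h16 : (0:ℝ) < 16*s := by positivity
    rw [show (8*s)⁻¹ + -(ξ₀ - z)^2/(16*s) = (2 - (ξ₀-z)^2)/(16*s) by field_simp; ring,
      show -u^2/(8*s) = (-2*u^2)/(16*s) by field_simp; ring,
      div_le_div_iff₀ h16 h16]
    have h3 : -2*u^2 ≤ 2 - (ξ₀ - z)^2 := by linarith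
    exact mul_le_mul_of_nonneg_right h3 h16.le
  have final : |u| / (2*s) * Real.exp (-u^2 / (4*s))
      ≤ (Real.sqrt s)⁻¹ * Real.exp ((8*s)⁻¹) * Real.exp (-(ξ₀ - z)^2 / (16 * s)) := by
    refine stepA'.trans ?_
    rw [mul_assoc]
    exact mul_le_mul_of_nonneg_left stepB (by positivity)
  rw [h1]
  exact mul_le_mul_of_nonneg_left final (by positivity)

/-- the dominating function for the inner parametric derivative is integrable -/
lemma ball_bound_integrable (hs : 0 < s) (ξ₀ : ℝ) :
    Integrable (fun z => Real.exp (-s) / Real.sqrt (4 * Real.pi * s) * ((Real.sqrt s)⁻¹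
      * Real.exp ((8*s)⁻¹) * Real.exp (-(ξ₀ - z)^2 / (16 * s)))) := by
  have hg : Integrable (fun z : ℝ => Real.exp (-((16*s)⁻¹) * (z - ξ₀)^2)) :=
    (integrable_exp_neg_mul_sq (by positivity)).comp_sub_right ξ₀
  have hg2 := hg.const_mul (Real.exp (-s) / Real.sqrt (4 * Real.pi * s) *
    ((Real.sqrt s)⁻¹ * Real.exp ((8*s)⁻¹)))
  refine hg2.congr (Eventually.of_forall fun z => ?_)
  have harg : -((16*s)⁻¹) * (z - ξ₀)^2 = -(ξ₀ - z)^2 / (16 * s) := by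
    field_simp; ring
  dsimp only
  rw [harg]
  ring

/-- inner parametric derivative -/
lemma inner_hasDerivAt (hs : 0 < s) (hψ : Continuous ψ) (hbd : ∀ z, |ψ z| ≤ m) (ξ₀ : ℝ) :
    HasDerivAt (fun x => ∫ z, ker s x z * ψ z) (∫ z, ker' s ξ₀ z * ψ z) ξ₀ := by
  have hm : 0 ≤ m := le_trans (abs_nonneg _) (hbd 0)
  refine (hasDerivAt_integral_of_dominated_loc_of_deriv_le (Metric.ball_mem_nhds ξ₀ one_pos)
    (F := fun x z => ker s x z * ψ z) (F' := fun x z => ker' s x z * ψ z)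
    (bound := fun z => m * (Real.exp (-s) / Real.sqrt (4 * Real.pi * s) * ((Real.sqrt s)⁻¹
      * Real.exp ((8*s)⁻¹) * Real.exp (-(ξ₀ - z)^2 / (16 * s)))))
    ?_ ?_ ?_ ?_ ?_ ?_).2
  · exact Eventually.of_forall fun x =>
      ((ker_continuous s x).mul hψ).aestronglyMeasurable
  · exact ker_mul_integrable hs ξ₀ hψ hbd
  · exact ((ker'_continuous s ξ₀).mul hψ).aestronglyMeasurable
  · refine Eventually.of_forall fun z => fun x hx => ?_
    rw [Real.norm_eq_abs, abs_mul]
    calc |ker' s x z| * |ψ z| ≤ (Real.exp (-s) / Real.sqrt (4 * Real.pi * s) * ((Real.sqrt s)⁻¹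
          * Real.exp ((8*s)⁻¹) * Real.exp (-(ξ₀ - z)^2 / (16 * s)))) * m := by
          refine mul_le_mul (ker'_ball_bound hs ξ₀ hx) (hbd z) (abs_nonneg _) ?_
          positivity
      _ = _ := by ring
  · exact (ball_bound_integrable hs ξ₀).const_mul m
  · exact Eventually.of_forall fun z => fun x _ => (ker_hasDerivAt hs z x).mul_const (ψ z)


lemma ker_shift (s t u : ℝ) : ker s t (u + t) = ker s 0 u := by
  unfold ker
  congr 2
  ring

lemma ker'_shift (s t u : ℝ) : ker' s t (u + t) = ker' s 0 u := by
  unfold ker'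
  rw [ker_shift]
  congr 1
  ring

lemma inner_tendsto_top (hs : 0 < s) (hφ : Continuous φ) (hbd : ∀ z, |φ z| ≤ m)
    (hlim : Tendsto φ atTop (𝓝 L)) (r : ℝ) :
    Tendsto (fun t => ∫ z, ker s t z * φ (z - r)) atTop (𝓝 (Real.exp (-s) * L)) := by
  have heq : ∀ t : ℝ, ∫ z, ker s t z * φ (z - r) = ∫ u, ker s 0 u * φ (u + t - r) := by
    intro t
    rw [← integral_add_right_eq_self (μ := volume) (fun z => ker s t z * φ (z - r)) t]
    congr 1 with u
    rw [ker_shift]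
  have hDCT : Tendsto (fun t => ∫ u, ker s 0 u * φ (u + t - r)) atTop
      (𝓝 (∫ u, ker s 0 u * L)) := by
    refine tendsto_integral_filter_of_dominated_convergence
      (bound := fun u => ker s 0 u * m) ?_ ?_ ?_ ?_
    · exact Eventually.of_forall fun t =>
        ((ker_continuous s 0).mul (hφ.comp ((continuous_id.add continuous_const).sub
          continuous_const))).aestronglyMeasurable
    · refine Eventually.of_forall fun t => Eventually.of_forall fun u => ?_
      rw [Real.norm_eq_abs, abs_mul, abs_of_nonneg (ker_pos hs).le]
      exact mul_le_mul_of_nonneg_left (hbd _) (ker_pos hs).le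
    · exact (ker_integrable hs 0).mul_const m
    · refine Eventually.of_forall fun u => ?_
      refine tendsto_const_nhds.mul ?_
      refine hlim.comp ?_
      have : (fun t : ℝ => u + t - r) = fun t => t + (u - r) := by funext t; ring
      rw [this]
      exact tendsto_atTop_add_const_right atTop (u - r) tendsto_id
  have hval : ∫ u, ker s 0 u * L = Real.exp (-s) * L := by
    rw [integral_mul_const, ker_integral hs]
  rw [← hval]
  exact hDCT.congr fun t => (heq t).symm

lemma inner'_tendsto_top (hs : 0 < s) (hφ : Continuous φ) (hbd : ∀ z, |φ z| ≤ m)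
    (hlim : Tendsto φ atTop (𝓝 L)) (r : ℝ) :
    Tendsto (fun t => ∫ z, ker' s t z * φ (z - r)) atTop (𝓝 0) := by
  have hψc : ∀ t : ℝ, Continuous fun z => φ (z - r) :=
    fun t => hφ.comp (continuous_id.sub continuous_const)
  have heq : ∀ t : ℝ, ∫ z, ker' s t z * φ (z - r)
      = ∫ u, ker' s 0 u * (φ (u + t - r) - L) := by
    intro t
    rw [ker'_mul_sub_const (m := m) hs t (hψc t) (fun z => hbd (z - r)) L,
      ← integral_add_right_eq_self (μ := volume)
        (fun z => ker' s t z * (φ (z - r) - L)) t]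
    congr 1 with u
    rw [ker'_shift]
  have hDCT : Tendsto (fun t => ∫ u, ker' s 0 u * (φ (u + t - r) - L)) atTop
      (𝓝 (∫ u, ker' s 0 u * 0)) := by
    refine tendsto_integral_filter_of_dominated_convergence
      (bound := fun u => |ker' s 0 u| * (m + |L|)) ?_ ?_ ?_ ?_
    · exact Eventually.of_forall fun t =>
        ((ker'_continuous s 0).mul (((hφ.comp ((continuous_id.add continuous_const).sub
          continuous_const))).sub continuous_const)).aestronglyMeasurable
    · refine Eventually.of_forall fun t => Eventually.of_forall fun u => ?_
      rw [Real.norm_eq_abs, abs_mul]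
      refine mul_le_mul_of_nonneg_left ?_ (abs_nonneg _)
      exact (abs_sub _ _).trans (add_le_add (hbd _) le_rfl)
    · exact (ker'_integrable hs 0).abs.mul_const _
    · refine Eventually.of_forall fun u => ?_
      refine tendsto_const_nhds.mul ?_
      have h0 : Tendsto (fun t : ℝ => φ (u + t - r)) atTop (𝓝 L) := by
        refine hlim.comp ?_
        have : (fun t : ℝ => u + t - r) = fun t => t + (u - r) := by funext t; ring
        rw [this]
        exact tendsto_atTop_add_const_right atTop (u - r) tendsto_id
      simpa using h0.sub (tendsto_const_nhds : Tendsto (fun _ : ℝ => L) atTop (𝓝 L))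
  simp only [mul_zero, integral_zero] at hDCT
  exact hDCT.congr fun t => (heq t).symm


/-- linearity : kernel against `cc - ψ` -/
lemma ker_mul_const_sub {s m : ℝ} {ψ : ℝ → ℝ} (hs : 0 < s) (ξ : ℝ) (hψ : Continuous ψ)
    (hbd : ∀ z, |ψ z| ≤ m) (cc : ℝ) :
    ∫ z, ker s ξ z * (cc - ψ z) = Real.exp (-s) * cc - ∫ z, ker s ξ z * ψ z := by
  have h1 : Integrable (fun z => ker s ξ z * cc) := (ker_integrable hs ξ).mul_const cc
  have h2 : Integrable (fun z => ker s ξ z * ψ z) := ker_mul_integrable hs ξ hψ hbd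
  have : ∫ z, ker s ξ z * (cc - ψ z)
      = (∫ z, ker s ξ z * cc) - ∫ z, ker s ξ z * ψ z := by
    rw [← integral_sub h1 h2]
    congr 1 with z
    ring
  rw [this, integral_mul_const, ker_integral hs]

/-- measurability of the inner integral as a function of `s` -/
lemma outer_meas {φ : ℝ → ℝ} (hφ : Continuous φ) (r ξ : ℝ) :
    StronglyMeasurable (fun s => ∫ z, ker s ξ z * φ (z - r * s)) := by
  have hm : StronglyMeasurable (fun p : ℝ × ℝ => ker p.1 ξ p.2 * φ (p.2 - r * p.1)) := by
    apply Measurable.stronglyMeasurable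
    unfold ker
    apply Measurable.mul
    · apply Measurable.mul
      · exact (measurable_fst.neg.exp).div
          ((measurable_const.mul measurable_fst).sqrt)
      · exact (((measurable_const.sub measurable_snd).pow measurable_const).neg.div
          (measurable_const.mul measurable_fst)).exp
    · exact hφ.measurable.comp (measurable_snd.sub (measurable_const.mul measurable_fst))
  exact hm.integral_prod_right'

lemma outer_meas' {φ : ℝ → ℝ} (hφ : Continuous φ) (r ξ : ℝ) :
    StronglyMeasurable (fun s => ∫ z, ker' s ξ z * φ (z - r * s)) := by
  have hm : StronglyMeasurable (fun p : ℝ × ℝ => ker' p.1 ξ p.2 * φ (p.2 - r * p.1)) := by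
    apply Measurable.stronglyMeasurable
    unfold ker' ker
    apply Measurable.mul
    · apply Measurable.mul
      · exact (measurable_const.sub measurable_snd).neg.div
          (measurable_const.mul measurable_fst)
      · apply Measurable.mul
        · exact (measurable_fst.neg.exp).div
            ((measurable_const.mul measurable_fst).sqrt)
        · exact (((measurable_const.sub measurable_snd).pow measurable_const).neg.div
            (measurable_const.mul measurable_fst)).exp
    · exact hφ.measurable.comp (measurable_snd.sub (measurable_const.mul measurable_fst))
  exact hm.integral_prod_right'

lemma exp_neg_integrableOn : IntegrableOn (fun s => Real.exp (-s)) (Ioi (0:ℝ)) := by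
  have := exp_neg_integrableOn_Ioi 0 (one_pos (α := ℝ))
  refine this.congr_fun ?_ measurableSet_Ioi
  intro s _
  norm_num

lemma expSqrt_eq {s : ℝ} (hs : 0 < s) :
    Real.exp (-s) * s ^ ((1:ℝ)/2 - 1) * (Real.sqrt Real.pi)⁻¹
      = Real.exp (-s) / Real.sqrt (Real.pi * s) := by
  have h1 : s ^ ((1:ℝ)/2 - 1) = (Real.sqrt s)⁻¹ := by
    rw [show (1:ℝ)/2 - 1 = -(1/2) by norm_num, Real.rpow_neg hs.le,
      ← Real.sqrt_eq_rpow]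
  rw [h1, Real.sqrt_mul Real.pi_pos.le]
  have hπ : Real.sqrt Real.pi ≠ 0 := (Real.sqrt_pos.2 Real.pi_pos).ne'
  have hss : Real.sqrt s ≠ 0 := (Real.sqrt_pos.2 hs).ne'
  field_simp

lemma expSqrt_integrableOn :
    IntegrableOn (fun s => Real.exp (-s) / Real.sqrt (Real.pi * s)) (Ioi (0:ℝ)) := by
  have h : IntegrableOn (fun s : ℝ => Real.exp (-s) * s ^ ((1:ℝ)/2 - 1) * (Real.sqrt Real.pi)⁻¹)
      (Ioi (0:ℝ)) := (Real.GammaIntegral_convergent (by norm_num : (0:ℝ) < 1/2)).mul_const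
    (Real.sqrt Real.pi)⁻¹
  refine h.congr_fun ?_ measurableSet_Ioi
  intro s hs
  exact expSqrt_eq hs

lemma expSqrt_integral :
    ∫ s in Ioi (0:ℝ), Real.exp (-s) / Real.sqrt (Real.pi * s) = 1 := by
  have h := Real.Gamma_eq_integral (by norm_num : (0:ℝ) < 1/2)
  rw [Real.Gamma_one_half_eq] at h
  have hcongr : ∫ s in Ioi (0:ℝ), Real.exp (-s) / Real.sqrt (Real.pi * s)
      = ∫ s in Ioi (0:ℝ), Real.exp (-s) * s ^ ((1:ℝ)/2 - 1) * (Real.sqrt Real.pi)⁻¹ := by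
    refine setIntegral_congr_fun measurableSet_Ioi fun s hs => ?_
    exact (expSqrt_eq hs).symm
  rw [hcongr, integral_mul_const, ← h]
  have hπ : Real.sqrt Real.pi ≠ 0 := (Real.sqrt_pos.2 Real.pi_pos).ne'
  field_simp


end BesselAux

open BesselAux

/-- basic estimates for the Bessel potential `η = B[φ̂]`:
`0 < η < a/b`, `|η'| ≤ a/(2b)`, `η → a/b` and `η' → 0` at `+∞`. -/
theorem besselB_estimates
    (a b τ c : ℝ) (ha : 0 < a) (hb : 0 < b) (hτ : 0 ≤ τ) (hc : 0 < c)
    (φ : ℝ → ℝ) (hcont : Continuous φ)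
    (h0 : ∀ t, 0 ≤ φ t) (h1 : ∀ t, φ t ≤ a / b)
    (hne0 : ∃ t, φ t ≠ 0) (hneab : ∃ t, φ t ≠ a / b)
    (hlim : Tendsto φ atTop (𝓝 (a/b))) :
    (∀ t, 0 < besselB τ c φ t) ∧ (∀ t, besselB τ c φ t < a / b) ∧
    (∀ t, |deriv (besselB τ c φ) t| ≤ a / (2*b)) ∧
    Tendsto (besselB τ c φ) atTop (𝓝 (a/b)) ∧
    Tendsto (deriv (besselB τ c φ)) atTop (𝓝 0) := by
  set m := a / b with hmdef
  have hm : 0 < m := div_pos ha hb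
  have hbd : ∀ z, |φ z| ≤ m := fun z => by rw [abs_of_nonneg (h0 z)]; exact h1 z
  set F : ℝ → ℝ → ℝ := fun ξ s => ∫ z, ker s ξ z * φ (z - τ * c * s) with hFdef
  set F' : ℝ → ℝ → ℝ := fun ξ s => ∫ z, ker' s ξ z * φ (z - τ * c * s) with hF'def
  have hψc : ∀ s : ℝ, Continuous fun z => φ (z - τ * c * s) :=
    fun s => hcont.comp (continuous_id.sub continuous_const)
  have hψbd : ∀ s : ℝ, ∀ z, |φ (z - τ * c * s)| ≤ m := fun s z => hbd _
  have hψ0 : ∀ s : ℝ, ∀ z, 0 ≤ φ (z - τ * c * s) := fun s z => h0 _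
  have hψ1 : ∀ s : ℝ, ∀ z, φ (z - τ * c * s) ≤ m := fun s z => h1 _
  have hBeq : ∀ ξ, besselB τ c φ ξ = ∫ s in Ioi (0:ℝ), F ξ s := fun ξ => rfl
  have hFmeas : ∀ ξ, AEStronglyMeasurable (F ξ) (volume.restrict (Ioi 0)) :=
    fun ξ => (outer_meas hcont (τ*c) ξ).aestronglyMeasurable
  have hF'meas : ∀ ξ, AEStronglyMeasurable (F' ξ) (volume.restrict (Ioi 0)) :=
    fun ξ => (outer_meas' hcont (τ*c) ξ).aestronglyMeasurable
  have hFint : ∀ ξ, IntegrableOn (F ξ) (Ioi 0) := by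
    intro ξ
    refine Integrable.mono' (exp_neg_integrableOn.mul_const m) (hFmeas ξ) ?_
    refine (ae_restrict_iff' measurableSet_Ioi).2 (Eventually.of_forall fun s hs => ?_)
    have hb2 := ker_mul_le hs ξ (hψc s) (hψ0 s) (hψ1 s)
    rw [Real.norm_eq_abs, abs_of_nonneg hb2.1]
    exact hb2.2
  have hbound' : ∀ x : ℝ, ∀ s ∈ Ioi (0:ℝ),
      |F' x s| ≤ (m/2) * (Real.exp (-s) / Real.sqrt (Real.pi * s)) := by
    intro x s hs
    refine ker'_mul_bound hs x (hψc s) (hψbd s) (cc := m/2) ?_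
    intro z
    rw [abs_le]
    exact ⟨by linarith [hψ0 s z], by linarith [hψ1 s z]⟩
  have hboundInt : IntegrableOn
      (fun s => (m/2) * (Real.exp (-s) / Real.sqrt (Real.pi * s))) (Ioi 0) :=
    expSqrt_integrableOn.const_mul _
  have hF'int : ∀ ξ, IntegrableOn (F' ξ) (Ioi 0) := by
    intro ξ
    refine Integrable.mono' hboundInt (hF'meas ξ) ?_
    refine (ae_restrict_iff' measurableSet_Ioi).2 (Eventually.of_forall fun s hs => ?_)
    rw [Real.norm_eq_abs]
    exact hbound' ξ s hs
  have hDeriv : ∀ ξ₀ : ℝ, HasDerivAt (besselB τ c φ) (∫ s in Ioi (0:ℝ), F' ξ₀ s) ξ₀ := by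
    intro ξ₀
    have key := hasDerivAt_integral_of_dominated_loc_of_deriv_le
      (μ := volume.restrict (Ioi (0:ℝ))) (F := F) (F' := F') (x₀ := ξ₀)
      (bound := fun s => (m/2) * (Real.exp (-s) / Real.sqrt (Real.pi * s))) (Metric.ball_mem_nhds ξ₀ one_pos)
      (Eventually.of_forall fun x => hFmeas x)
      (hFint ξ₀) (hF'meas ξ₀)
      ((ae_restrict_iff' measurableSet_Ioi).2 (Eventually.of_forall fun s hs x hx => by
        rw [Real.norm_eq_abs]; exact hbound' x s hs))
      hboundInt
      ((ae_restrict_iff' measurableSet_Ioi).2 (Eventually.of_forall fun s hs x hx =>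
        inner_hasDerivAt hs (hψc s) (hψbd s) x))
    exact key.2
  have hderivEq : ∀ t, deriv (besselB τ c φ) t = ∫ s in Ioi (0:ℝ), F' t s :=
    fun t => (hDeriv t).deriv
  -- (1) positivity
  have hpos : ∀ t, 0 < besselB τ c φ t := by
    intro t
    rw [hBeq t]
    obtain ⟨t₀, ht₀⟩ := hne0
    have hφt₀ : 0 < φ t₀ := lt_of_le_of_ne (h0 t₀) (Ne.symm ht₀)
    have hFpos : ∀ s ∈ Ioi (0:ℝ), 0 < F t s := by
      intro s hs
      refine ker_mul_pos hs t (hψc s) (hψ0 s) (hψ1 s) (z₀ := t₀ + τ * c * s) ?_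
      show 0 < φ (t₀ + τ * c * s - τ * c * s)
      rwa [add_sub_cancel_right]
    refine (integral_pos_iff_support_of_nonneg_ae ?_ (hFint t)).2 ?_
    · exact (ae_restrict_iff' measurableSet_Ioi).2
        (Eventually.of_forall fun s hs => (hFpos s hs).le)
    · refine lt_of_lt_of_le ?_
        (measure_mono (fun s hs => (hFpos s hs).ne' : Ioi (0:ℝ) ⊆ Function.support (F t)))
      rw [Measure.restrict_apply_self, Real.volume_Ioi]
      exact ENNReal.zero_lt_top
  -- (2) upper bound
  have hlt : ∀ t, besselB τ c φ t < m := by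
    intro t
    obtain ⟨t₁, ht₁⟩ := hneab
    have hφt₁ : φ t₁ < m := lt_of_le_of_ne (h1 t₁) ht₁
    have hGpos : ∀ s ∈ Ioi (0:ℝ), 0 < Real.exp (-s) * m - F t s := by
      intro s hs
      rw [show Real.exp (-s) * m - F t s = ∫ z, ker s t z * (m - φ (z - τ*c*s)) from
        (ker_mul_const_sub hs t (hψc s) (hψbd s) m).symm]
      refine ker_mul_pos (m := m) hs t (continuous_const.sub (hψc s))
        (fun z => by linarith [hψ1 s z]) (fun z => by linarith [hψ0 s z])
        (z₀ := t₁ + τ*c*s) ?_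
      show 0 < m - φ (t₁ + τ*c*s - τ*c*s)
      rw [add_sub_cancel_right]
      linarith
    have hGint : IntegrableOn (fun s => Real.exp (-s) * m - F t s) (Ioi 0) :=
      (exp_neg_integrableOn.mul_const m).sub (hFint t)
    have hIpos : 0 < ∫ s in Ioi (0:ℝ), (Real.exp (-s) * m - F t s) := by
      refine (integral_pos_iff_support_of_nonneg_ae ?_ hGint).2 ?_
      · exact (ae_restrict_iff' measurableSet_Ioi).2
          (Eventually.of_forall fun s hs => (hGpos s hs).le)
      · refine lt_of_lt_of_le ?_ (measure_mono (fun s hs => (hGpos s hs).ne' :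
          Ioi (0:ℝ) ⊆ Function.support fun s => Real.exp (-s) * m - F t s))
        rw [Measure.restrict_apply_self, Real.volume_Ioi]
        exact ENNReal.zero_lt_top
    have hsplit : ∫ s in Ioi (0:ℝ), (Real.exp (-s) * m - F t s)
        = m - ∫ s in Ioi (0:ℝ), F t s := by
      rw [integral_sub (exp_neg_integrableOn.mul_const m) (hFint t),
        integral_mul_const, integral_exp_neg_Ioi_zero, one_mul]
    rw [hsplit] at hIpos
    rw [hBeq t]
    linarith
  -- (3) derivative bound
  have hm2 : m/2 = a/(2*b) := by rw [hmdef, div_div, mul_comm]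
  have hd : ∀ t, |deriv (besselB τ c φ) t| ≤ a/(2*b) := by
    intro t
    rw [hderivEq t, ← hm2]
    calc |∫ s in Ioi (0:ℝ), F' t s| ≤ ∫ s in Ioi (0:ℝ), |F' t s| := by
          simpa only [Real.norm_eq_abs] using
            norm_integral_le_integral_norm (μ := volume.restrict (Ioi 0)) (F' t)
      _ ≤ ∫ s in Ioi (0:ℝ), (m/2) * (Real.exp (-s)/Real.sqrt (Real.pi * s)) :=
          setIntegral_mono_on (hF'int t).abs hboundInt measurableSet_Ioi
            fun s hs => hbound' t s hs
      _ = m/2 := by rw [integral_const_mul, expSqrt_integral, mul_one]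
  -- (4) limit of besselB
  have h4 : Tendsto (besselB τ c φ) atTop (𝓝 m) := by
    have hval : ∫ s in Ioi (0:ℝ), Real.exp (-s) * m = m := by
      rw [integral_mul_const, integral_exp_neg_Ioi_zero, one_mul]
    have hT := tendsto_integral_filter_of_dominated_convergence
      (μ := volume.restrict (Ioi (0:ℝ))) (F := F) (f := fun s => Real.exp (-s) * m)
      (l := atTop) (bound := fun s => Real.exp (-s) * m)
      (Eventually.of_forall fun t => hFmeas t)
      (Eventually.of_forall fun t => (ae_restrict_iff' measurableSet_Ioi).2
        (Eventually.of_forall fun s hs => by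
          have hb2 := ker_mul_le hs t (hψc s) (hψ0 s) (hψ1 s)
          rw [Real.norm_eq_abs, abs_of_nonneg hb2.1]
          exact hb2.2))
      (exp_neg_integrableOn.mul_const m)
      ((ae_restrict_iff' measurableSet_Ioi).2 (Eventually.of_forall fun s hs =>
        inner_tendsto_top hs hcont hbd hlim (τ*c*s)))
    rw [hval] at hT
    exact hT.congr fun t => (hBeq t).symm
  -- (5) limit of the derivative
  have h5 : Tendsto (deriv (besselB τ c φ)) atTop (𝓝 0) := by
    have hT := tendsto_integral_filter_of_dominated_convergence
      (μ := volume.restrict (Ioi (0:ℝ))) (F := F') (f := fun _ => (0:ℝ))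
      (l := atTop) (bound := fun s => (m/2) * (Real.exp (-s)/Real.sqrt (Real.pi * s)))
      (Eventually.of_forall fun t => hF'meas t)
      (Eventually.of_forall fun t => (ae_restrict_iff' measurableSet_Ioi).2
        (Eventually.of_forall fun s hs => by
          rw [Real.norm_eq_abs]
          exact hbound' t s hs))
      hboundInt
      ((ae_restrict_iff' measurableSet_Ioi).2 (Eventually.of_forall fun s hs =>
        inner'_tendsto_top hs hcont hbd hlim (τ*c*s)))
    rw [integral_zero] at hT
    exact hT.congr fun t => (hderivEq t).symm
  exact ⟨hpos, hlt, hd, h4, h5⟩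
end

section
/- Let m>1, a,b>0, c∈ℝ, let h ∈ C¹([0,a/b]) with h(0)=0, and suppose ψ ∈ C¹((0,a/b)) is bounded, ψ(u)>0 for u∈(0,a/b), ψ(u)→0 as u→0⁺ and as u→(a/b)⁻, and ψ satisfies ψ'(u) = c + h'(u) + mu^{m−1}(bu²−au)/ψ(u) for u∈(0,a/b). Then for every g ∈ C¹([0,a/b]) with g(a/b)=0 and g'(u)<0 on (0,a/b): c∫₀^{a/b}g(u)du ≥ 2∫₀^{a/b}√(−g'(u)g(u)·mu^{m−1}(au−bu²))du − ∫₀^{a/b}(−g'(u))h(u)du. -/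
open MeasureTheory Filter Topology Set

lemma amgm_sqrt {x y : ℝ} (hx : 0 ≤ x) (hy : 0 ≤ y) : 2 * Real.sqrt (x * y) ≤ x + y := by
  rw [Real.sqrt_mul hx]
  nlinarith [Real.sq_sqrt hx, Real.sq_sqrt hy, Real.sqrt_nonneg x, Real.sqrt_nonneg y,
    sq_nonneg (Real.sqrt x - Real.sqrt y)]

/-- variational inequality from the phase-plane equation:
if `ψ` is a positive bounded `C¹` trajectory on `(0, a/b)` with `ψ → 0` at both ends,
solving `ψ' = c + h' + mu^{m-1}(bu² - au)/ψ`, then every admissible test function `g`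
yields `c∫g ≥ 2∫√(-g'g·mu^{m-1}(au-bu²)) - ∫(-g')h`. -/
theorem phase_plane_variational_inequality
    (m a b c : ℝ) (h ψ : ℝ → ℝ)
    (hm : 1 < m) (ha : 0 < a) (hb : 0 < b)
    (hh : ContDiffOn ℝ 1 h (Set.Icc 0 (a/b))) (hh0 : h 0 = 0)
    (hψC1 : ContDiffOn ℝ 1 ψ (Set.Ioo 0 (a/b)))
    (hψbdd : ∃ M : ℝ, ∀ u ∈ Set.Ioo 0 (a/b), |ψ u| ≤ M)
    (hψpos : ∀ u ∈ Set.Ioo 0 (a/b), 0 < ψ u)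
    (hψ0 : Tendsto ψ (𝓝[>] 0) (𝓝 0))
    (hψab : Tendsto ψ (𝓝[<] (a/b)) (𝓝 0))
    (hODE : ∀ u ∈ Set.Ioo 0 (a/b),
      deriv ψ u = c + deriv h u + m * u^(m-1) * (b*u^2 - a*u) / ψ u) :
    ∀ g : ℝ → ℝ, ContDiffOn ℝ 1 g (Set.Icc 0 (a/b)) → g (a/b) = 0 →
      (∀ u ∈ Set.Ioo 0 (a/b), deriv g u < 0) →
      c * ∫ u in (0:ℝ)..(a/b), g u ≥
        2 * (∫ u in (0:ℝ)..(a/b),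
            Real.sqrt (-(deriv g u) * g u * (m * u^(m-1) * (a*u - b*u^2))))
        - ∫ u in (0:ℝ)..(a/b), (-(deriv g u)) * h u := by
  intro g hg hgr hg'
  have hr : (0:ℝ) < a / b := div_pos ha hb
  set r := a / b with hrdef
  obtain ⟨M, hM⟩ := hψbdd
  have hIccnhds : ∀ u ∈ Ioo (0:ℝ) r, Icc (0:ℝ) r ∈ 𝓝 u := fun u hu => Icc_mem_nhds hu.1 hu.2
  -- pointwise derivatives
  have hgd : ∀ u ∈ Ioo (0:ℝ) r, HasDerivAt g (deriv g u) u := fun u hu =>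
    ((hg.differentiableOn one_ne_zero).differentiableAt (hIccnhds u hu)).hasDerivAt
  have hhd : ∀ u ∈ Ioo (0:ℝ) r, HasDerivAt h (deriv h u) u := fun u hu =>
    ((hh.differentiableOn one_ne_zero).differentiableAt (hIccnhds u hu)).hasDerivAt
  have hψd : ∀ u ∈ Ioo (0:ℝ) r, HasDerivAt ψ (deriv ψ u) u := fun u hu =>
    ((hψC1.differentiableOn one_ne_zero).differentiableAt (isOpen_Ioo.mem_nhds hu)).hasDerivAt
  -- the continuous representative of deriv g on the closed interval
  set G := derivWithin g (Icc 0 r) with hGdef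
  have hGcont : ContinuousOn G (Icc 0 r) :=
    hg.continuousOn_derivWithin (uniqueDiffOn_Icc hr) le_rfl
  have hGeq : ∀ u ∈ Ioo (0:ℝ) r, G u = deriv g u := fun u hu =>
    derivWithin_of_mem_nhds (hIccnhds u hu)
  -- the reaction factor
  set F : ℝ → ℝ := fun u => m * u ^ (m - 1) * (a * u - b * u ^ 2) with hFdef
  have hFcont : ContinuousOn F (Icc 0 r) := by
    apply ContinuousOn.mul
    · exact continuousOn_const.mul ((Real.continuous_rpow_const (by linarith)).continuousOn)
    · fun_prop
  have hFnn : ∀ u ∈ Ioo (0:ℝ) r, 0 ≤ F u := by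
    intro u hu
    have h1 : 0 ≤ u ^ (m-1) := Real.rpow_nonneg hu.1.le _
    have h2 : u * b < a := (lt_div_iff₀ hb).mp hu.2
    have h3 : 0 ≤ a * u - b * u ^ 2 := by nlinarith [hu.1]
    have h0 : (0:ℝ) ≤ m := by linarith
    positivity
  -- g is nonnegative
  have hganti : StrictAntiOn g (Icc 0 r) := by
    apply strictAntiOn_of_deriv_neg (convex_Icc _ _) hg.continuousOn
    rwa [interior_Icc]
  have hgnn : ∀ u ∈ Icc (0:ℝ) r, 0 ≤ g u := by
    intro u hu
    rcases eq_or_lt_of_le hu.2 with h' | h'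
    · rw [h', hgr]
    · have := hganti hu (right_mem_Icc.mpr hr.le) h'
      rw [hgr] at this; linarith
  -- continuity of derivatives on the open interval
  have hg'cont : ContinuousOn (deriv g) (Ioo 0 r) :=
    (hGcont.mono Ioo_subset_Icc_self).congr fun u hu => (hGeq u hu).symm
  have hh'cont : ContinuousOn (deriv h) (Ioo 0 r) :=
    (hh.mono Ioo_subset_Icc_self).continuousOn_deriv_of_isOpen isOpen_Ioo le_rfl
  have hψ'cont : ContinuousOn (deriv ψ) (Ioo 0 r) :=
    hψC1.continuousOn_deriv_of_isOpen isOpen_Ioo le_rfl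
  have hψcont : ContinuousOn ψ (Ioo 0 r) := hψC1.continuousOn
  -- sqrt integrand, continuous version
  set S : ℝ → ℝ := fun u => Real.sqrt (-(G u) * g u * F u) with hSdef
  have hScont : ContinuousOn S (Icc 0 r) :=
    (((hGcont.neg.mul hg.continuousOn).mul hFcont)).sqrt
  -- rewrite the two integrals in the goal
  have hae : ∀ᵐ (u : ℝ), u ∈ uIoc (0:ℝ) r → u ∈ Ioo (0:ℝ) r := by
    rw [ae_iff]
    refine measure_mono_null (fun u hu => ?_) (measure_singleton r)
    simp only [mem_setOf_eq, Classical.not_imp] at hu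
    rcases hu with ⟨h1, h2⟩
    rw [uIoc_of_le hr.le] at h1
    simp only [mem_Ioo, mem_Ioc, not_and, not_lt] at h1 h2
    have := le_antisymm h1.2 (h2 h1.1)
    simp [this]
  have e_sqrt : (∫ u in (0:ℝ)..r,
      Real.sqrt (-(deriv g u) * g u * (m * u^(m-1) * (a*u - b*u^2)))) = ∫ u in (0:ℝ)..r, S u := by
    apply intervalIntegral.integral_congr_ae
    filter_upwards [hae] with u hu h1
    rw [hSdef]; simp only; rw [hGeq u (hu h1)]
  have e_gh : (∫ u in (0:ℝ)..r, (-(deriv g u)) * h u) = ∫ u in (0:ℝ)..r, (-(G u)) * h u := by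
    apply intervalIntegral.integral_congr_ae
    filter_upwards [hae] with u hu h1
    rw [hGeq u (hu h1)]
  rw [e_sqrt, e_gh]
  -- key pointwise inequality
  have key : ∀ u ∈ Ioo (0:ℝ) r,
      deriv g u * ψ u + g u * deriv ψ u ≤ c * g u + g u * deriv h u - 2 * S u := by
    intro u hu
    have hP := hψpos u hu
    have hFu := hFnn u hu
    have hgu := hgnn u (Ioo_subset_Icc_self hu)
    have hx : 0 ≤ -(deriv g u) * ψ u := mul_nonneg (by linarith [hg' u hu]) hP.le
    have hy : 0 ≤ g u * F u / ψ u := div_nonneg (mul_nonneg hgu hFu) hP.le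
    have hamgm := amgm_sqrt hx hy
    have hxy : -(deriv g u) * ψ u * (g u * F u / ψ u) = -(deriv g u) * g u * F u := by
      field_simp
    rw [hxy] at hamgm
    have hSu : S u = Real.sqrt (-(deriv g u) * g u * F u) := by
      rw [hSdef]; simp only; rw [hGeq u hu]
    have hODEu := hODE u hu
    have hgmul : g u * (m * u^(m-1) * (b*u^2 - a*u) / ψ u) = -(g u * F u / ψ u) := by
      rw [hFdef]; field_simp; ring
    rw [hODEu, hSu, mul_add, mul_add, hgmul]
    nlinarith [hamgm]
    -- limit filter
  set l : Filter ℝ := 𝓝[Ioo (0:ℝ) (r/2)] 0 with hldef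
  have hlne : l.NeBot := by
    rw [hldef]
    apply mem_closure_iff_nhdsWithin_neBot.mp
    rw [closure_Ioo (show (0:ℝ) ≠ r/2 by intro hc; linarith [hr])]
    exact ⟨le_rfl, by linarith⟩
  have hsub_half : Ioo (0:ℝ) (r/2) ⊆ Icc 0 r := fun x hx => ⟨hx.1.le, by linarith [hx.2]⟩
  have l_le_Icc : l ≤ 𝓝[Icc (0:ℝ) r] 0 := nhdsWithin_mono _ hsub_half
  have hIccuIcc : uIcc (0:ℝ) r = Icc 0 r := uIcc_of_le hr.le
  have tmapIcc : Tendsto (fun t : ℝ => r - t) l (𝓝[Icc (0:ℝ) r] r) := by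
    rw [tendsto_nhdsWithin_iff]
    constructor
    · have h1 : Tendsto (fun t : ℝ => r - t) (𝓝 0) (𝓝 (r - 0)) :=
        tendsto_const_nhds.sub tendsto_id
      simpa using h1.mono_left nhdsWithin_le_nhds
    · filter_upwards [self_mem_nhdsWithin] with t ht
      exact ⟨by nlinarith [ht.1, ht.2], by linarith [ht.1]⟩
  -- limits of the truncated integrals
  have keylim : ∀ f : ℝ → ℝ, ContinuousOn f (Icc 0 r) →
      Tendsto (fun t => ∫ u in t..(r - t), f u) l (𝓝 (∫ u in (0:ℝ)..r, f u)) := by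
    intro f hfc
    have hfi : IntervalIntegrable f volume 0 r := by
      apply ContinuousOn.intervalIntegrable
      rwa [hIccuIcc]
    have hprim : ContinuousOn (fun x => ∫ u in (0:ℝ)..x, f u) (Icc 0 r) := by
      have h1 := intervalIntegral.continuousOn_primitive_interval (μ := volume) (a := (0:ℝ))
        (b := r) (f := f) (by rw [hIccuIcc]; exact hfc.integrableOn_Icc)
      rwa [hIccuIcc] at h1
    have t1 : Tendsto (fun t => ∫ u in (0:ℝ)..t, f u) l (𝓝 (∫ u in (0:ℝ)..(0:ℝ), f u)) :=
      (hprim 0 (left_mem_Icc.mpr hr.le)).mono_left l_le_Icc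
    have t2 : Tendsto (fun t => ∫ u in (0:ℝ)..(r - t), f u) l (𝓝 (∫ u in (0:ℝ)..r, f u)) :=
      Filter.Tendsto.comp (hprim r (right_mem_Icc.mpr hr.le)) tmapIcc
    have t3 := t2.sub t1
    simp only [intervalIntegral.integral_same, sub_zero] at t3
    apply t3.congr'
    filter_upwards [self_mem_nhdsWithin] with t ht
    have hmem1 : uIcc (0:ℝ) (r - t) ⊆ uIcc (0:ℝ) r := by
      rw [hIccuIcc, uIcc_of_le (by linarith [ht.1, ht.2] : (0:ℝ) ≤ r - t)]
      exact Icc_subset_Icc le_rfl (by linarith [ht.1])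
    have hmem2 : uIcc (0:ℝ) t ⊆ uIcc (0:ℝ) r := by
      rw [hIccuIcc, uIcc_of_le ht.1.le]
      exact Icc_subset_Icc le_rfl (by linarith [ht.2])
    exact intervalIntegral.integral_interval_sub_left (hfi.mono_set hmem1) (hfi.mono_set hmem2)
  -- the main estimate on truncated intervals
  have main : ∀ᶠ t in l,
      (g (r-t) * ψ (r-t) - g t * ψ t) - (g (r-t) * h (r-t) - g t * h t)
        ≤ c * (∫ u in t..(r-t), g u) - (∫ u in t..(r-t), G u * h u)
          - 2 * ∫ u in t..(r-t), S u := by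
    filter_upwards [self_mem_nhdsWithin] with t ht
    have hts : t ≤ r - t := by linarith [ht.2]
    have huIcc : uIcc t (r - t) = Icc t (r - t) := uIcc_of_le hts
    have hsubI : Icc t (r - t) ⊆ Ioo 0 r := fun x hx =>
      ⟨lt_of_lt_of_le ht.1 hx.1, lt_of_le_of_lt hx.2 (by linarith [ht.1])⟩
    have hsubI' : Icc t (r - t) ⊆ Icc 0 r := hsubI.trans Ioo_subset_Icc_self
    have iK : IntervalIntegrable (fun u => deriv g u * ψ u + g u * deriv ψ u) volume t (r-t) := by
      apply ContinuousOn.intervalIntegrable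
      rw [huIcc]
      exact ((hg'cont.mono hsubI).mul (hψcont.mono hsubI)).add
        ((hg.continuousOn.mono hsubI').mul (hψ'cont.mono hsubI))
    have ig : IntervalIntegrable g volume t (r-t) := by
      apply ContinuousOn.intervalIntegrable
      rw [huIcc]; exact hg.continuousOn.mono hsubI'
    have igh' : IntervalIntegrable (fun u => g u * deriv h u) volume t (r-t) := by
      apply ContinuousOn.intervalIntegrable
      rw [huIcc]; exact (hg.continuousOn.mono hsubI').mul (hh'cont.mono hsubI)
    have ig'h : IntervalIntegrable (fun u => deriv g u * h u) volume t (r-t) := by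
      apply ContinuousOn.intervalIntegrable
      rw [huIcc]; exact (hg'cont.mono hsubI).mul (hh.continuousOn.mono hsubI')
    have iS : IntervalIntegrable S volume t (r-t) := by
      apply ContinuousOn.intervalIntegrable
      rw [huIcc]; exact hScont.mono hsubI'
    have iR : IntervalIntegrable (fun u => c * g u + g u * deriv h u - 2 * S u) volume t (r-t) :=
      ((ig.const_mul c).add igh').sub (iS.const_mul 2)
    have ftc1 : (∫ u in t..(r-t), (deriv g u * ψ u + g u * deriv ψ u))
        = g (r-t) * ψ (r-t) - g t * ψ t := by
      apply intervalIntegral.integral_eq_sub_of_hasDerivAt (f := fun u => g u * ψ u) _ iK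
      intro x hx
      rw [huIcc] at hx
      exact (hgd x (hsubI hx)).mul (hψd x (hsubI hx))
    have ftc2 : (∫ u in t..(r-t), (deriv g u * h u + g u * deriv h u))
        = g (r-t) * h (r-t) - g t * h t := by
      apply intervalIntegral.integral_eq_sub_of_hasDerivAt (f := fun u => g u * h u) _ (ig'h.add igh')
      intro x hx
      rw [huIcc] at hx
      exact (hgd x (hsubI hx)).mul (hhd x (hsubI hx))
    have hmono : (∫ u in t..(r-t), (deriv g u * ψ u + g u * deriv ψ u))
        ≤ ∫ u in t..(r-t), (c * g u + g u * deriv h u - 2 * S u) :=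
      intervalIntegral.integral_mono_on hts iK iR fun x hx => key x (hsubI hx)
    have hsplit : (∫ u in t..(r-t), (c * g u + g u * deriv h u - 2 * S u))
        = c * (∫ u in t..(r-t), g u) + (∫ u in t..(r-t), g u * deriv h u)
          - 2 * ∫ u in t..(r-t), S u := by
      rw [intervalIntegral.integral_sub ((ig.const_mul c).add igh') (iS.const_mul 2),
          intervalIntegral.integral_add (ig.const_mul c) igh',
          intervalIntegral.integral_const_mul, intervalIntegral.integral_const_mul]
    have hsplit2 : (∫ u in t..(r-t), (deriv g u * h u + g u * deriv h u))
        = (∫ u in t..(r-t), deriv g u * h u) + ∫ u in t..(r-t), g u * deriv h u :=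
      intervalIntegral.integral_add ig'h igh'
    have hGsub : (∫ u in t..(r-t), deriv g u * h u) = ∫ u in t..(r-t), G u * h u := by
      apply intervalIntegral.integral_congr
      intro x hx
      rw [huIcc] at hx
      show deriv g x * h x = G x * h x
      rw [hGeq x (hsubI hx)]
    rw [ftc1, hsplit] at hmono
    rw [ftc2, hGsub] at hsplit2
    linarith
  -- pass to the limit
  have limg := keylim g hg.continuousOn
  have limGh := keylim (fun u => G u * h u) (hGcont.mul hh.continuousOn)
  have limS := keylim S hScont
  have limR : Tendsto (fun t => c * (∫ u in t..(r-t), g u) - (∫ u in t..(r-t), G u * h u)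
      - 2 * ∫ u in t..(r-t), S u) l
      (𝓝 (c * (∫ u in (0:ℝ)..r, g u) - (∫ u in (0:ℝ)..r, G u * h u)
        - 2 * ∫ u in (0:ℝ)..r, S u)) :=
    ((limg.const_mul c).sub limGh).sub (limS.const_mul 2)
  have tg0 : Tendsto g l (𝓝 (g 0)) :=
    (hg.continuousOn 0 (left_mem_Icc.mpr hr.le)).mono_left l_le_Icc
  have tψ0 : Tendsto ψ l (𝓝 0) := hψ0.mono_left (nhdsWithin_mono _ fun x hx => hx.1)
  have tgr : Tendsto (fun t => g (r - t)) l (𝓝 0) := by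
    have h1 : Tendsto (fun t => g (r - t)) l (𝓝 (g r)) :=
      Filter.Tendsto.comp (hg.continuousOn r (right_mem_Icc.mpr hr.le)) tmapIcc
    rwa [hgr] at h1
  have th0 : Tendsto h l (𝓝 0) := by
    have h1 : Tendsto h l (𝓝 (h 0)) :=
      (hh.continuousOn 0 (left_mem_Icc.mpr hr.le)).mono_left l_le_Icc
    rwa [hh0] at h1
  have thr : Tendsto (fun t => h (r - t)) l (𝓝 (h r)) :=
    Filter.Tendsto.comp (hh.continuousOn r (right_mem_Icc.mpr hr.le)) tmapIcc
  have tgψr : Tendsto (fun t => g (r-t) * ψ (r-t)) l (𝓝 0) := by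
    apply squeeze_zero_norm' (a := fun t => |g (r-t)| * M)
    · filter_upwards [self_mem_nhdsWithin] with t ht
      have hmem : r - t ∈ Ioo 0 r := ⟨by nlinarith [ht.1, ht.2], by linarith [ht.1]⟩
      calc ‖g (r-t) * ψ (r-t)‖ = |g (r-t)| * |ψ (r-t)| := by
            rw [Real.norm_eq_abs, abs_mul]
        _ ≤ |g (r-t)| * M := mul_le_mul_of_nonneg_left (hM _ hmem) (abs_nonneg _)
    · have h1 : Tendsto (fun t => |g (r-t)| * M) l (𝓝 (|(0:ℝ)| * M)) := tgr.abs.mul_const M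
      simpa using h1
  have limL : Tendsto (fun t => (g (r-t) * ψ (r-t) - g t * ψ t)
      - (g (r-t) * h (r-t) - g t * h t)) l (𝓝 0) := by
    have h1 : Tendsto (fun t => g t * ψ t) l (𝓝 (g 0 * 0)) := tg0.mul tψ0
    have h2 : Tendsto (fun t => g (r-t) * h (r-t)) l (𝓝 (0 * h r)) := tgr.mul thr
    have h3 : Tendsto (fun t => g t * h t) l (𝓝 (g 0 * 0)) := tg0.mul th0
    have h4 := (tgψr.sub h1).sub (h2.sub h3)
    simpa using h4
  have final := le_of_tendsto_of_tendsto limL limR main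
  have hneg : (∫ u in (0:ℝ)..r, (-(G u)) * h u) = -∫ u in (0:ℝ)..r, G u * h u := by
    simp only [neg_mul]
    exact intervalIntegral.integral_neg
  rw [hneg]
  linarith
end

section
/- Fix m>1 and I>0, and set f(s) = ms^m(1−s). There exist δ ∈ (0,1] and a C¹ function ρ₀:[0,δ)→[0,∞) with ρ₀(0)=0, ρ₀(s)>0 for s∈(0,δ), satisfying ρ₀'(s) = 2I√(ρ₀(s)) − 2f(s) on (0,δ), such that ρ₀(s) = I²s² + o(s²) as s→0⁺; moreover there exists s₀ ∈ (0,δ) such that ρ₀(s) ≥ I²s²/2 for all s∈(0,s₀). -/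
open MeasureTheory intervalIntegral Filter Topology Set Asymptotics

set_option maxHeartbeats 1000000 in
/-- existence of the maximal solution `ρ₀` of the singular problem
`ρ₀' = 2I√ρ₀ - 2f(s)`, `ρ₀(0) = 0`, with `f(s) = ms^m(1-s)`, positive on `(0,δ)`,
satisfying `ρ₀(s) = I²s² + o(s²)` as `s → 0⁺`, and `ρ₀(s) ≥ I²s²/2` near `0`. -/
theorem singular_ODE_lower_barrier
    (m Iv : ℝ) (hm : 1 < m) (hI : 0 < Iv) :
    ∃ δ : ℝ, δ ∈ Set.Ioc (0:ℝ) 1 ∧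
      ∃ ρ₀ : ℝ → ℝ,
        ContDiffOn ℝ 1 ρ₀ (Set.Ico 0 δ) ∧ ρ₀ 0 = 0 ∧
        (∀ s ∈ Set.Ico (0:ℝ) δ, 0 ≤ ρ₀ s) ∧
        (∀ s ∈ Set.Ioo (0:ℝ) δ, 0 < ρ₀ s ∧
          HasDerivAt ρ₀ (2*Iv*Real.sqrt (ρ₀ s) - 2*(m*s^m*(1-s))) s) ∧
        ((fun s => ρ₀ s - Iv^2 * s^2) =o[𝓝[>] (0:ℝ)] fun s => s^2) ∧
        ∃ s₀ ∈ Set.Ioo (0:ℝ) δ, ∀ s ∈ Set.Ioo (0:ℝ) s₀, Iv^2 * s^2 / 2 ≤ ρ₀ s := by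
  have hm0 : (0:ℝ) < m := by linarith
  have hm1 : (0:ℝ) < m - 1 := by linarith
  set ε : ℝ := min (Iv^2/4) ((m-1)*Iv^2/(8*m)) with hεdef
  have hε0 : 0 < ε := lt_min (by positivity) (by positivity)
  set δ : ℝ := min 1 (ε ^ (m-1)⁻¹) with hδdef
  have hδ0 : 0 < δ := lt_min one_pos (Real.rpow_pos_of_pos hε0 _)
  have hδ1 : δ ≤ 1 := min_le_left _ _
  have hδε : δ ^ (m-1) ≤ ε := by
    calc δ ^ (m-1) ≤ (ε ^ (m-1)⁻¹) ^ (m-1) :=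
          Real.rpow_le_rpow hδ0.le (min_le_right _ _) hm1.le
    _ = ε := Real.rpow_inv_rpow hε0.le (ne_of_gt hm1)
  have hδ2 : δ ^ (m-1) ≤ Iv^2/4 := hδε.trans (min_le_left _ _)
  have hδ3 : δ ^ (m-1) ≤ (m-1)*Iv^2/(8*m) := hδε.trans (min_le_right _ _)
  -- clamp to [0, δ]
  set c : ℝ → ℝ := fun s => max 0 (min s δ) with hcdef
  have hc_cont : Continuous c := continuous_const.max (continuous_id.min continuous_const)
  have hc_mem : ∀ s, c s ∈ Icc (0:ℝ) δ :=
    fun s => ⟨le_max_left _ _, max_le hδ0.le (min_le_right _ _)⟩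
  have hc_id : ∀ s ∈ Icc (0:ℝ) δ, c s = s := by
    intro s hs
    rw [hcdef]; simp only [min_eq_left hs.2, max_eq_right hs.1]
  -- f
  set f : ℝ → ℝ := fun t => m * t ^ m * (1 - t) with hfdef
  have hf_cont : Continuous f := by
    have h1 : Continuous fun t : ℝ => t ^ m :=
      continuous_iff_continuousAt.2 fun t => Real.continuousAt_rpow_const t m (Or.inr hm0.le)
    exact ((continuous_const.mul h1).mul (continuous_const.sub continuous_id))
  have hf0 : f 0 = 0 := by
    simp [hfdef, Real.zero_rpow (ne_of_gt hm0)]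
  have hf_nonneg : ∀ t ∈ Icc (0:ℝ) δ, 0 ≤ f t := by
    intro t ht
    have : t ≤ 1 := ht.2.trans hδ1
    have := Real.rpow_nonneg ht.1 m
    have : (0:ℝ) ≤ 1 - t := by linarith
    positivity
  have hf_le : ∀ t ∈ Icc (0:ℝ) δ, f t ≤ m * t ^ m := by
    intro t ht
    have h1 : 1 - t ≤ 1 := by linarith [ht.1]
    have h2 : (0:ℝ) ≤ m * t ^ m := mul_nonneg hm0.le (Real.rpow_nonneg ht.1 m)
    calc f t = m * t ^ m * (1 - t) := rfl
    _ ≤ m * t ^ m * 1 := by nlinarith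
    _ = m * t ^ m := by ring
  -- value clamp
  set w : (BoundedContinuousFunction ℝ ℝ) → ℝ → ℝ := fun u τ => max 0 (min (u τ) (Iv * τ / 2)) with hwdef
  have hw_cont : ∀ u, Continuous (w u) :=
    fun u => continuous_const.max ((u.continuous).min ((continuous_const.mul continuous_id).div_const 2))
  have hw_mem : ∀ u τ, 0 ≤ τ → 0 ≤ w u τ ∧ w u τ ≤ Iv * τ / 2 := by
    intro u τ hτ
    refine ⟨le_max_left _ _, max_le (by positivity) (min_le_right _ _)⟩
  have hw_lip : ∀ (u v : BoundedContinuousFunction ℝ ℝ) τ, |w u τ - w v τ| ≤ dist u v := by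
    intro u v τ
    have h1 : |w u τ - w v τ| ≤ |min (u τ) (Iv * τ / 2) - min (v τ) (Iv * τ / 2)| := by
      rw [hwdef]
      simpa [max_comm] using
        abs_max_sub_max_le_abs (min (u τ) (Iv * τ / 2)) (min (v τ) (Iv * τ / 2)) 0
    have h2 : |min (u τ) (Iv * τ / 2) - min (v τ) (Iv * τ / 2)| ≤ |u τ - v τ| := by
      simpa using abs_min_sub_min_le_max (u τ) (Iv * τ / 2) (v τ) (Iv * τ / 2)
    have h3 : |u τ - v τ| ≤ dist u v := by
      rw [← Real.dist_eq]; exact BoundedContinuousFunction.dist_coe_le_dist τ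
    linarith
  -- integrand
  set g : (BoundedContinuousFunction ℝ ℝ) → ℝ → ℝ := fun u τ => f τ / (Iv * τ - w u τ) with hgdef
  have hden : ∀ u, ∀ τ ∈ Icc (0:ℝ) δ, Iv * τ / 2 ≤ Iv * τ - w u τ := by
    intro u τ hτ
    have := (hw_mem u τ hτ.1).2
    linarith
  have hg_bound : ∀ u, ∀ τ ∈ Icc (0:ℝ) δ,
      0 ≤ g u τ ∧ g u τ ≤ (2*m/Iv) * τ ^ (m-1) := by
    intro u τ hτ
    rcases eq_or_lt_of_le hτ.1 with h0 | h0
    · have hw0 : w u 0 = 0 := by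
        have := hw_mem u 0 le_rfl
        simp only [mul_zero, zero_div] at this
        linarith [this.1, this.2]
      constructor
      · rw [hgdef, ← h0]; simp [hf0]
      · rw [hgdef, ← h0]
        simp only [hf0, zero_div]
        positivity
    · have hd : 0 < Iv * τ - w u τ := lt_of_lt_of_le (by positivity) (hden u τ hτ)
      constructor
      · exact div_nonneg (hf_nonneg τ hτ) hd.le
      · have h1 : g u τ ≤ m * τ ^ m / (Iv * τ / 2) := by
          apply div_le_div₀ (by positivity) (hf_le τ hτ) (by positivity) (hden u τ hτ)
        have h2 : m * τ ^ m / (Iv * τ / 2) = (2*m/Iv) * τ ^ (m-1) := by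
          rw [Real.rpow_sub_one (ne_of_gt h0)]
          field_simp
        rw [h2] at h1; exact h1
  have hg_contOn : ∀ u, ContinuousOn (g u) (Icc (0:ℝ) δ) := by
    intro u τ hτ
    rcases eq_or_lt_of_le hτ.1 with h0 | h0
    · -- continuity at 0 by squeeze
      have hg00 : g u τ = 0 := by rw [hgdef, ← h0]; simp [hf0]
      rw [ContinuousWithinAt, hg00]
      have hbnd : Tendsto (fun τ : ℝ => (2*m/Iv) * τ ^ (m-1)) (𝓝[Icc (0:ℝ) δ] τ) (𝓝 0) := by
        have hc : ContinuousAt (fun τ : ℝ => (2*m/Iv) * τ ^ (m-1)) 0 :=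
          (continuousAt_const.mul (Real.continuousAt_rpow_const 0 (m-1) (Or.inr hm1.le)))
        have h00 : (2*m/Iv) * (0:ℝ) ^ (m-1) = 0 := by
          simp [Real.zero_rpow (ne_of_gt hm1)]
        rw [← h0]
        have h2 : Tendsto (fun τ : ℝ => (2*m/Iv) * τ ^ (m-1)) (𝓝[Icc (0:ℝ) δ] 0)
            (𝓝 ((2*m/Iv) * (0:ℝ) ^ (m-1))) := hc.continuousWithinAt
        rwa [h00] at h2
      apply squeeze_zero'
      · exact eventually_nhdsWithin_of_forall (fun x hx => (hg_bound u x hx).1)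
      · exact eventually_nhdsWithin_of_forall (fun x hx => (hg_bound u x hx).2)
      · exact hbnd
    · have hd : 0 < Iv * τ - w u τ := lt_of_lt_of_le (by positivity) (hden u τ hτ)
      exact (hf_cont.continuousWithinAt.div
        ((continuous_const.mul continuous_id).sub (hw_cont u)).continuousWithinAt
        (ne_of_gt hd))
  -- composed integrand
  have hgc_cont : ∀ u, Continuous (fun t => g u (c t)) :=
    fun u => (hg_contOn u).comp_continuous hc_cont hc_mem
  have hgc_intable : ∀ u (a b : ℝ), IntervalIntegrable (fun t => g u (c t)) volume a b :=
    fun u a b => (hgc_cont u).intervalIntegrable a b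
  have hprim : ∀ u s, HasDerivAt (fun y => ∫ t in (0:ℝ)..y, g u (c t)) (g u (c s)) s := by
    intro u s
    exact integral_hasDerivAt_right (hgc_intable u 0 s)
      ((hgc_cont u).stronglyMeasurableAtFilter volume (𝓝 s)) (hgc_cont u).continuousAt
  have hsubmem : ∀ s ∈ Icc (0:ℝ) δ, ∀ t ∈ Icc (0:ℝ) s, t ∈ Icc (0:ℝ) δ :=
    fun s hs t ht => ⟨ht.1, ht.2.trans hs.2⟩
  have hrpow_int : ∀ (r a b : ℝ), -1 < r → IntervalIntegrable (fun t : ℝ => t ^ r) volume a b :=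
    fun r a b hr => intervalIntegrable_rpow' hr
  have hrpow_eval : ∀ (r s : ℝ), -1 < r → r ≠ -1 →
      ∫ t in (0:ℝ)..s, t ^ r = s ^ (r+1) / (r+1) := by
    intro r s hr hr'
    rw [integral_rpow (Or.inl hr)]
    rw [Real.zero_rpow (by linarith : r + 1 ≠ 0)]
    ring
  -- bounds on the primitive
  have hK1 : ∀ u, ∀ s ∈ Icc (0:ℝ) δ, 0 ≤ ∫ t in (0:ℝ)..s, g u (c t) := by
    intro u s hs
    apply intervalIntegral.integral_nonneg hs.1
    intro t ht
    have ht' := hsubmem s hs t ht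
    have := (hg_bound u (c t) (hc_mem t)).1
    exact this
  have hK2 : ∀ u, ∀ s ∈ Icc (0:ℝ) δ, (∫ t in (0:ℝ)..s, g u (c t)) ≤ (2/Iv) * s ^ m := by
    intro u s hs
    have step1 : (∫ t in (0:ℝ)..s, g u (c t)) ≤ ∫ t in (0:ℝ)..s, (2*m/Iv) * t ^ (m-1) := by
      apply integral_mono_on hs.1 (hgc_intable u 0 s)
        ((hrpow_int (m-1) 0 s (by linarith)).const_mul _)
      intro t ht
      have ht' := hsubmem s hs t ht
      simpa [hc_id t ht'] using (hg_bound u (c t) (hc_mem t)).2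
    have step2 : (∫ t in (0:ℝ)..s, (2*m/Iv) * t ^ (m-1)) = (2/Iv) * s ^ m := by
      rw [intervalIntegral.integral_const_mul, hrpow_eval (m-1) s (by linarith) (by linarith)]
      have hm' : m - 1 + 1 = m := by ring
      rw [hm']
      field_simp
    linarith
  have hK3 : ∀ s ∈ Icc (0:ℝ) δ, (2/Iv) * s ^ m ≤ Iv * s / 2 := by
    intro s hs
    rcases eq_or_lt_of_le hs.1 with h0 | h0
    · rw [← h0, Real.zero_rpow (ne_of_gt hm0)]
      simp
    · have h1 : s ^ m = s ^ (m-1) * s := by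
        rw [Real.rpow_sub_one (ne_of_gt h0)]
        field_simp
      have h2 : s ^ (m-1) ≤ δ ^ (m-1) := Real.rpow_le_rpow hs.1 hs.2 hm1.le
      have h3 : s ^ (m-1) ≤ Iv^2/4 := h2.trans hδ2
      have h4 : (0:ℝ) ≤ s ^ (m-1) := Real.rpow_nonneg hs.1 _
      rw [h1]
      calc (2/Iv) * (s ^ (m-1) * s) ≤ (2/Iv) * ((Iv^2/4) * s) := by
            apply mul_le_mul_of_nonneg_left _ (by positivity)
            exact mul_le_mul_of_nonneg_right h3 h0.le
      _ = Iv * s / 2 := by field_simp; ring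
  have hK4 : ∀ u, ∀ s ∈ Icc (0:ℝ) δ, (∫ t in (0:ℝ)..s, g u (c t)) ≤ Iv * s / 2 :=
    fun u s hs => (hK2 u s hs).trans (hK3 s hs)
  -- the map T
  have hTcont : ∀ u, Continuous fun s => ∫ t in (0:ℝ)..(c s), g u (c t) := by
    intro u
    have h1 : Continuous fun y => ∫ t in (0:ℝ)..y, g u (c t) :=
      continuous_iff_continuousAt.2 fun y => (hprim u y).continuousAt
    exact h1.comp hc_cont
  have hTbd : ∀ u (s : ℝ), ‖∫ t in (0:ℝ)..(c s), g u (c t)‖ ≤ Iv * δ / 2 := by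
    intro u s
    have hcs := hc_mem s
    rw [Real.norm_eq_abs, abs_le]
    constructor
    · have := hK1 u (c s) hcs
      have : (0:ℝ) ≤ Iv * δ / 2 := by positivity
      linarith [hK1 u (c s) hcs]
    · have h1 := hK4 u (c s) hcs
      have h2 : Iv * (c s) / 2 ≤ Iv * δ / 2 := by
        have := hcs.2
        nlinarith
      linarith
  set T : BoundedContinuousFunction ℝ ℝ → BoundedContinuousFunction ℝ ℝ := fun u =>
    BoundedContinuousFunction.ofNormedAddCommGroup
      (fun s => ∫ t in (0:ℝ)..(c s), g u (c t)) (hTcont u) (Iv*δ/2) (hTbd u) with hTdef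
  have hTapp : ∀ u s, T u s = ∫ t in (0:ℝ)..(c s), g u (c t) := fun u s => rfl
  -- pointwise Lipschitz bound for g
  have hg_lip : ∀ u v, ∀ τ ∈ Icc (0:ℝ) δ,
      |g u τ - g v τ| ≤ (4*m/Iv^2) * dist u v * τ ^ (m-2) := by
    intro u v τ hτ
    rcases eq_or_lt_of_le hτ.1 with h0 | h0
    · have e1 : g u τ = 0 := by rw [hgdef, ← h0]; simp [hf0]
      have e2 : g v τ = 0 := by rw [hgdef, ← h0]; simp [hf0]
      rw [e1, e2, sub_zero, abs_zero]
      have hτn : (0:ℝ) ≤ τ ^ (m-2) := by rw [← h0]; exact Real.rpow_nonneg le_rfl _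
      have hD : (0:ℝ) ≤ dist u v := dist_nonneg
      positivity
    · have hA : Iv*τ/2 ≤ Iv*τ - w u τ := hden u τ hτ
      have hB : Iv*τ/2 ≤ Iv*τ - w v τ := hden v τ hτ
      have hhalf : (0:ℝ) < Iv*τ/2 := by positivity
      have hA0 : 0 < Iv*τ - w u τ := lt_of_lt_of_le hhalf hA
      have hB0 : 0 < Iv*τ - w v τ := lt_of_lt_of_le hhalf hB
      have key : g u τ - g v τ = f τ * (w u τ - w v τ) / ((Iv*τ - w u τ) * (Iv*τ - w v τ)) := by
        rw [hgdef]
        field_simp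
        ring
      rw [key, abs_div, abs_mul]
      have hABpos : 0 < (Iv*τ - w u τ) * (Iv*τ - w v τ) := mul_pos hA0 hB0
      rw [abs_of_pos hABpos]
      have hnum : |f τ| * |w u τ - w v τ| ≤ (m * τ ^ m) * dist u v := by
        apply mul_le_mul _ (hw_lip u v τ) (abs_nonneg _) (by positivity)
        rw [abs_of_nonneg (hf_nonneg τ hτ)]
        exact hf_le τ hτ
      have hden2 : (Iv*τ/2) * (Iv*τ/2) ≤ (Iv*τ - w u τ) * (Iv*τ - w v τ) :=
        mul_le_mul hA hB hhalf.le hA0.le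
      have step : |f τ| * |w u τ - w v τ| / ((Iv*τ - w u τ) * (Iv*τ - w v τ))
          ≤ (m * τ ^ m) * dist u v / ((Iv*τ/2) * (Iv*τ/2)) :=
        div_le_div₀ (by positivity) hnum (by positivity) hden2
      refine step.trans (le_of_eq ?_)
      have hτm : τ ^ (m-2) = τ ^ m / (τ * τ) := by
        rw [show m - 2 = m - 1 - 1 by ring, Real.rpow_sub_one (ne_of_gt h0),
          Real.rpow_sub_one (ne_of_gt h0)]
        ring
      rw [hτm]
      field_simp
      ring
  -- contraction estimate
  have hTdist : ∀ u v, dist (T u) (T v) ≤ (1/2) * dist u v := by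
    intro u v
    rw [BoundedContinuousFunction.dist_le (by positivity)]
    intro s
    have hcs := hc_mem s
    rw [hTapp u s, hTapp v s, Real.dist_eq]
    have hint : (∫ t in (0:ℝ)..(c s), g u (c t)) - (∫ t in (0:ℝ)..(c s), g v (c t))
        = ∫ t in (0:ℝ)..(c s), (g u (c t) - g v (c t)) :=
      (integral_sub (hgc_intable u 0 (c s)) (hgc_intable v 0 (c s))).symm
    rw [hint]
    have h1 : |∫ t in (0:ℝ)..(c s), (g u (c t) - g v (c t))|
        ≤ ∫ t in (0:ℝ)..(c s), |g u (c t) - g v (c t)| :=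
      abs_integral_le_integral_abs hcs.1
    have h2 : (∫ t in (0:ℝ)..(c s), |g u (c t) - g v (c t)|)
        ≤ ∫ t in (0:ℝ)..(c s), ((4*m/Iv^2) * dist u v) * t ^ (m-2) := by
      apply integral_mono_on hcs.1
        (((hgc_intable u 0 (c s)).sub (hgc_intable v 0 (c s))).abs)
        ((hrpow_int (m-2) 0 (c s) (by linarith)).const_mul _)
      intro t ht
      have ht' := hsubmem (c s) hcs t ht
      simpa [hc_id t ht'] using hg_lip u v (c t) (hc_mem t)
    have h3 : (∫ t in (0:ℝ)..(c s), ((4*m/Iv^2) * dist u v) * t ^ (m-2))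
        = ((4*m/Iv^2) * dist u v) * ((c s) ^ (m-1) / (m-1)) := by
      rw [intervalIntegral.integral_const_mul, hrpow_eval (m-2) (c s) (by linarith) (by linarith)]
      have e : m - 2 + 1 = m - 1 := by ring
      rw [e]
    have h4 : ((4*m/Iv^2) * dist u v) * ((c s) ^ (m-1) / (m-1)) ≤ (1/2) * dist u v := by
      have hb2 : (c s) ^ (m-1) ≤ (m-1)*Iv^2/(8*m) :=
        (Real.rpow_le_rpow hcs.1 hcs.2 hm1.le).trans hδ3
      have hb3 : (0:ℝ) ≤ (c s) ^ (m-1) := Real.rpow_nonneg hcs.1 _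
      have hD : (0:ℝ) ≤ dist u v := dist_nonneg
      calc ((4*m/Iv^2) * dist u v) * ((c s) ^ (m-1) / (m-1))
          ≤ ((4*m/Iv^2) * dist u v) * (((m-1)*Iv^2/(8*m)) / (m-1)) := by gcongr
      _ = (1/2) * dist u v := by field_simp [hI.ne', hm0.ne', hm1.ne']; ring
    linarith
  -- contraction and fixed point
  have hcontr : ContractingWith (1/2 : NNReal) T := by
    constructor
    · rw [← NNReal.coe_lt_coe]; norm_num
    · apply LipschitzWith.of_dist_le_mul
      intro u v
      calc dist (T u) (T v) ≤ (1/2) * dist u v := hTdist u v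
      _ = ((1/2 : NNReal) : ℝ) * dist u v := by norm_num
  haveI : Nonempty (BoundedContinuousFunction ℝ ℝ) := ⟨0⟩
  set ustar : BoundedContinuousFunction ℝ ℝ := ContractingWith.fixedPoint T hcontr with hustardef
  have hfix : T ustar = ustar := hcontr.fixedPoint_isFixedPt
  have hstar : ∀ s, ustar s = ∫ t in (0:ℝ)..(c s), g ustar (c t) := by
    intro s
    conv_lhs => rw [← hfix]
    exact hTapp ustar s
  -- the primitive H and the solution ρ₀
  set H : ℝ → ℝ := fun s => ∫ t in (0:ℝ)..s, g ustar (c t) with hHdef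
  have hHs : ∀ s ∈ Icc (0:ℝ) δ, H s = ustar s := by
    intro s hs
    rw [hHdef]
    simp only
    rw [hstar s, hc_id s hs]
  have hH1 : ∀ s ∈ Icc (0:ℝ) δ, 0 ≤ H s := fun s hs => hK1 ustar s hs
  have hH2 : ∀ s ∈ Icc (0:ℝ) δ, H s ≤ (2/Iv) * s ^ m := fun s hs => hK2 ustar s hs
  have hH3 : ∀ s ∈ Icc (0:ℝ) δ, H s ≤ Iv * s / 2 := fun s hs => (hH2 s hs).trans (hK3 s hs)
  have hgsval : ∀ s ∈ Icc (0:ℝ) δ, g ustar (c s) = f s / (Iv * s - H s) := by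
    intro s hs
    have h1 := hH1 s hs
    have h2 := hH3 s hs
    rw [hHs s hs] at h1 h2
    have hw : w ustar s = ustar s := by
      rw [hwdef]
      simp only [min_eq_left h2, max_eq_right h1]
    rw [hc_id s hs, hgdef]
    simp only [hw, hHs s hs]
  have hH' : ∀ s, HasDerivAt H (g ustar (c s)) s := fun s => hprim ustar s
  have hφ' : ∀ s, HasDerivAt (fun y => Iv * y - H y) (Iv - g ustar (c s)) s := by
    intro s
    have h := ((hasDerivAt_id s).const_mul Iv).fun_sub (hH' s)
    simpa using h
  have hρ' : ∀ s, HasDerivAt (fun y => (Iv*y - H y)^2)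
      (2*(Iv*s - H s)*(Iv - g ustar (c s))) s := by
    intro s
    have h : HasDerivAt (fun y => (Iv*y - H y)^2) _ s := (hφ' s).fun_pow 2
    convert h using 1
    push_cast
    ring
  have hρc : ContDiff ℝ 1 (fun y => (Iv*y - H y)^2) := by
    have hφc : ContDiff ℝ 1 (fun y => Iv * y - H y) := by
      rw [contDiff_one_iff_deriv]
      constructor
      · exact fun s => (hφ' s).differentiableAt
      · have hd : deriv (fun y => Iv * y - H y) = fun s => Iv - g ustar (c s) :=
          funext fun s => (hφ' s).deriv
        rw [hd]
        exact continuous_const.sub (hgc_cont ustar)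
    exact hφc.pow 2
  -- littleO
  have hlo : (fun s => (Iv*s - H s)^2 - Iv^2 * s^2) =o[𝓝[>] (0:ℝ)] fun s => s^2 := by
    rw [Asymptotics.isLittleO_iff]
    intro ε' hε'
    have hevent1 : ∀ᶠ s in 𝓝[>] (0:ℝ), s ∈ Ioo (0:ℝ) δ :=
      Ioo_mem_nhdsGT_of_mem ⟨le_refl 0, hδ0⟩
    have htend : Tendsto (fun s : ℝ => 4 * s ^ (m-1)) (𝓝[>] (0:ℝ)) (𝓝 0) := by
      have hct : ContinuousAt (fun s : ℝ => 4 * s ^ (m-1)) 0 :=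
        continuousAt_const.mul (Real.continuousAt_rpow_const 0 (m-1) (Or.inr hm1.le))
      have h : Tendsto (fun s : ℝ => 4 * s ^ (m-1)) (𝓝[>] (0:ℝ))
          (𝓝 ((4:ℝ) * (0:ℝ) ^ (m-1))) := hct.continuousWithinAt
      simpa [Real.zero_rpow hm1.ne'] using h
    have hevent2 : ∀ᶠ s in 𝓝[>] (0:ℝ), 4 * s ^ (m-1) ≤ ε' :=
      (htend.eventually_lt_const hε').mono fun s hs => hs.le
    filter_upwards [hevent1, hevent2] with s hs hsml
    have hsIcc : s ∈ Icc (0:ℝ) δ := ⟨hs.1.le, hs.2.le⟩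
    have h1 := hH1 s hsIcc
    have h2 := hH3 s hsIcc
    have hsm : s ^ m = s ^ (m-1) * s := by
      rw [Real.rpow_sub_one hs.1.ne']
      field_simp [hs.1.ne']
    have hIbound : H s ≤ (2/Iv) * (s^(m-1) * s) := by
      rw [← hsm]; exact hH2 s hsIcc
    have hsp : (0:ℝ) ≤ s ^ (m-1) := Real.rpow_nonneg hs.1.le _
    have key : |(Iv*s - H s)^2 - Iv^2*s^2| ≤ 4 * s^(m-1) * s^2 := by
      rw [abs_le]
      have e1 : (Iv*s - H s)^2 - Iv^2*s^2 = H s * (H s - 2*Iv*s) := by ring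
      have hb : H s * (2*Iv*s - H s) ≤ (2*Iv*s) * H s := by nlinarith
      have hb2 : (2*Iv*s) * H s ≤ (2*Iv*s) * ((2/Iv) * (s^(m-1) * s)) := by
        apply mul_le_mul_of_nonneg_left hIbound
          (mul_nonneg (mul_nonneg (by norm_num) hI.le) hs.1.le)
      have hb3 : (2*Iv*s) * ((2/Iv) * (s^(m-1) * s)) = 4 * s^(m-1) * s^2 := by
        field_simp
        ring
      constructor <;> nlinarith
    rw [Real.norm_eq_abs, Real.norm_eq_abs, abs_of_nonneg (sq_nonneg s)]
    calc |(Iv*s - H s)^2 - Iv^2*s^2| ≤ 4 * s^(m-1) * s^2 := key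
    _ ≤ ε' * s^2 := mul_le_mul_of_nonneg_right hsml (sq_nonneg s)
  -- assemble
  refine ⟨δ, ⟨hδ0, hδ1⟩, fun s => (Iv*s - H s)^2, hρc.contDiffOn, ?_, ?_, ?_, hlo, ?_⟩
  · have hH0 : H 0 = 0 := intervalIntegral.integral_same
    show (Iv * 0 - H 0)^2 = 0
    rw [hH0]
    ring
  · exact fun s _ => sq_nonneg _
  · intro s hs
    have hsIcc : s ∈ Icc (0:ℝ) δ := ⟨hs.1.le, hs.2.le⟩
    have hd : Iv * s / 2 ≤ Iv * s - H s := by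
      have := hH3 s hsIcc
      linarith
    have hDpos : 0 < Iv * s - H s := by
      have : (0:ℝ) < Iv * s / 2 := by
        have := hs.1
        positivity
      linarith
    constructor
    · exact pow_pos hDpos 2
    · have h := hρ' s
      convert h using 1
      rw [Real.sqrt_sq hDpos.le, hgsval s hsIcc]
      field_simp
      ring
  · have hev := hlo.def (by positivity : (0:ℝ) < Iv^2/2)
    have hev2 := hev.and (Ioo_mem_nhdsGT_of_mem ⟨le_refl (0:ℝ), hδ0⟩ :
      ∀ᶠ s in 𝓝[>] (0:ℝ), s ∈ Ioo (0:ℝ) δ)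
    rw [Filter.eventually_iff] at hev2
    rcases mem_nhdsGT_iff_exists_Ioo_subset.1 hev2 with ⟨a, ha, hsub⟩
    have ha0 : (0:ℝ) < a := ha
    refine ⟨min a δ / 2, ⟨by positivity, ?_⟩, ?_⟩
    · have h1 : min a δ / 2 ≤ δ / 2 := by gcongr; exact min_le_right a δ
      linarith
    · intro s hsml
      have hsa : s ∈ Ioo (0:ℝ) a := by
        constructor
        · exact hsml.1
        · have h1 : min a δ / 2 ≤ a / 2 := by gcongr; exact min_le_left a δ
          have h2 := hsml.2
          linarith
      have hmem := hsub hsa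
      simp only [mem_setOf_eq] at hmem
      obtain ⟨hbnd, hsδ⟩ := hmem
      rw [Real.norm_eq_abs, Real.norm_eq_abs, abs_of_nonneg (sq_nonneg s)] at hbnd
      have := abs_le.1 hbnd
      nlinarith [this.1, this.2]
end
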